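/- In the hyperbolic plane H², for every s > 0 and ε ≥ 0, the parallel domain of the horoball {z : s ≤ im z} at the ideal point ∞ is again a horoball at ∞: Metric.cthickening ε {z ∈ UpperHalfPlane : s ≤ im z} = {z ∈ UpperHalfPlane : s · Real.exp (−ε) ≤ im z}. Equivalently, for 0 < s ≤ r the nested horoballs {im ≥ r} ⊆ {im ≥ s} bound a horospherical strip of width Real.log (r/s): every point of {z : im z = s} is at distance exactly Real.log (r/s) from the horoball {z : r ≤ im z}. -/
import Mathlib

open UpperHalfPlane Metric

lemma horoball_infDist (r : ℝ) (z : ℍ) (hzr : z.im ≤ r) :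
    Metric.infDist z {w : ℍ | r ≤ w.im} = Real.log (r / z.im) := by
  have hz : 0 < z.im := z.im_pos
  have hr : 0 < r := hz.trans_le hzr
  set w0 : ℍ := UpperHalfPlane.mk ⟨z.re, r⟩ hr with hw0
  have hw0im : w0.im = r := rfl
  have hw0mem : w0 ∈ {w : ℍ | r ≤ w.im} := le_refl r
  have hne : Set.Nonempty {w : ℍ | r ≤ w.im} := ⟨w0, hw0mem⟩
  refine le_antisymm ?_ ?_
  · refine (Metric.infDist_le_dist_of_mem hw0mem).trans_eq ?_
    rw [UpperHalfPlane.dist_of_re_eq (show z.re = w0.re from rfl), hw0im,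
      Real.dist_eq, abs_of_nonpos (by
      simpa using Real.log_le_log hz hzr), Real.log_div hr.ne' hz.ne']
    ring
  · refine le_of_not_gt fun h => ?_
    obtain ⟨w, hw, hlt⟩ := (Metric.infDist_lt_iff hne).mp h
    have h1 : Real.log (r / z.im) ≤ dist z w := by
      calc Real.log (r / z.im) = Real.log r - Real.log z.im := Real.log_div hr.ne' hz.ne'
        _ ≤ Real.log w.im - Real.log z.im := by
            have := Real.log_le_log hr hw; linarith
        _ ≤ |Real.log w.im - Real.log z.im| := le_abs_self _
        _ = dist (Real.log z.im) (Real.log w.im) := by rw [Real.dist_eq, abs_sub_comm]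
        _ ≤ dist z w := UpperHalfPlane.dist_log_im_le z w
    exact absurd hlt (not_lt.mpr h1)

theorem stmt_8 :
    (∀ s : ℝ, 0 < s → ∀ ε : ℝ, 0 ≤ ε →
      Metric.cthickening ε {z : UpperHalfPlane | s ≤ z.im} =
        {z : UpperHalfPlane | s * Real.exp (-ε) ≤ z.im}) ∧
    (∀ s r : ℝ, 0 < s → s ≤ r → ∀ z : UpperHalfPlane, z.im = s →
      Metric.infDist z {w : UpperHalfPlane | r ≤ w.im} = Real.log (r / s)) := by
  constructor
  · intro s hs ε hε
    ext z
    have hz : 0 < z.im := z.im_pos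
    have hne : Set.Nonempty {w : ℍ | s ≤ w.im} :=
      ⟨UpperHalfPlane.mk ⟨0, s⟩ hs, le_refl s⟩
    rw [Set.mem_setOf_eq, show (z ∈ Metric.cthickening ε {z : ℍ | s ≤ z.im}) ↔
        Metric.infDist z {w : ℍ | s ≤ w.im} ≤ ε from
      (Metric.mem_cthickening_iff).trans
        (ENNReal.le_ofReal_iff_toReal_le (Metric.infEdist_ne_top hne) hε)]
    have hexp : Real.exp ε * Real.exp (-ε) = 1 := by rw [← Real.exp_add]; simp
    have key : ∀ hlt : z.im < s,
        (Real.log (s / z.im) ≤ ε ↔ s * Real.exp (-ε) ≤ z.im) := by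
      intro hlt
      rw [Real.log_le_iff_le_exp (by positivity), div_le_iff₀ hz]
      constructor <;> intro hh <;> nlinarith [Real.exp_pos ε, Real.exp_pos (-ε)]
    constructor
    · intro h
      rcases le_or_gt s z.im with hle | hlt
      · have h1 : Real.exp (-ε) ≤ 1 := Real.exp_le_one_iff.mpr (neg_nonpos.mpr hε)
        nlinarith [Real.exp_pos (-ε)]
      · rw [horoball_infDist s z hlt.le] at h
        exact (key hlt).mp h
    · intro h
      rcases le_or_gt s z.im with hle | hlt
      · rw [Metric.infDist_zero_of_mem (show z ∈ {w : ℍ | s ≤ w.im} from hle)]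
        exact hε
      · rw [horoball_infDist s z hlt.le]
        exact (key hlt).mpr h
  · intro s r hs hsr z hzs
    rw [← hzs] at hsr ⊢
    exact horoball_infDist r z hsr
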